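/- For every real A ≥ 0, the function f : ℝ → ℝ defined by f(y) = y(e^{y−A} − 1)/((y − A)(e^y − 1)) for y ∉ {0, A}, f(0) = (1 − e^{−A})/A (with f(0)=1 if A=0), f(A) = A/(e^A − 1), is monotone decreasing on ℝ. -/

import Mathlib

open Real MeasureTheory Set

/-- The continuous extension of `y ↦ y(e^{y−A} − 1)/((y − A)(e^y − 1))` at the removable
singularities `y = 0` and `y = A`. -/
noncomputable def fA (A y : ℝ) : ℝ :=
  if y = 0 then (if A = 0 then 1 else (1 - Real.exp (-A)) / A)
  else if y = A then A / (Real.exp A - 1)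
  else y * (Real.exp (y - A) - 1) / ((y - A) * (Real.exp y - 1))

/-- The slope-type function `g y = (e^y - 1)/y`, extended by `g 0 = 1`. -/
noncomputable def gg (y : ℝ) : ℝ := if y = 0 then 1 else (Real.exp y - 1) / y

lemma gg_pos (y : ℝ) : 0 < gg y := by
  unfold gg
  split_ifs with h
  · norm_num
  · rcases lt_or_gt_of_ne h with hy | hy
    · apply div_pos_of_neg_of_neg _ hy
      have : Real.exp y < Real.exp 0 := Real.exp_lt_exp.mpr hy
      simpa using by linarith [this, Real.exp_zero]
    · apply div_pos _ hy
      have : Real.exp 0 < Real.exp y := Real.exp_lt_exp.mpr hy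
      rw [Real.exp_zero] at this; linarith

lemma gg_eq_int (y : ℝ) : gg y = ∫ t in Set.Ioc (0:ℝ) 1, Real.exp (t * y) := by
  rw [← intervalIntegral.integral_of_le zero_le_one]
  unfold gg
  split_ifs with h
  · simp [h]
  · rw [intervalIntegral.integral_comp_mul_right (fun x => Real.exp x) h]
    simp only [zero_mul, one_mul, integral_exp, Real.exp_zero, smul_eq_mul]
    field_simp

lemma memLp_exp (c : ℝ) (p : ENNReal) :
    MemLp (fun t => Real.exp (t * c)) p (volume.restrict (Set.Ioc (0:ℝ) 1)) := by
  refine MemLp.mono_exponent (q := ⊤) ?_ le_top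
  refine memLp_top_of_bound
    ((Real.continuous_exp.comp (continuous_id.mul continuous_const)).aestronglyMeasurable)
    (Real.exp |c|) ?_
  filter_upwards [ae_restrict_mem measurableSet_Ioc] with t ht
  rw [Real.norm_of_nonneg (Real.exp_pos _).le]
  apply Real.exp_le_exp.mpr
  calc t * c ≤ |t * c| := le_abs_self _
    _ = t * |c| := by rw [abs_mul, abs_of_pos ht.1]
    _ ≤ 1 * |c| := by gcongr; exact ht.2
    _ = |c| := one_mul _

lemma gg_log_convex_ineq {x y a b : ℝ} (ha : 0 < a) (hb : 0 < b) (hab : a + b = 1) :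
    gg (a * x + b * y) ≤ gg x ^ a * gg y ^ b := by
  have e : Real.HolderConjugate (1/a) (1/b) := Real.holderConjugate_one_div ha hb hab
  rw [gg_eq_int, gg_eq_int, gg_eq_int]
  have key := MeasureTheory.integral_mul_le_Lp_mul_Lq_of_nonneg e
    (f := fun t => Real.exp (t * (a*x))) (g := fun t => Real.exp (t * (b*y)))
    (μ := volume.restrict (Set.Ioc (0:ℝ) 1))
    (Filter.Eventually.of_forall fun t => (Real.exp_pos _).le)
    (Filter.Eventually.of_forall fun t => (Real.exp_pos _).le)
    (memLp_exp _ _) (memLp_exp _ _)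
  rw [one_div_one_div, one_div_one_div] at key
  calc ∫ t in Set.Ioc (0:ℝ) 1, Real.exp (t * (a*x+b*y))
      = ∫ t in Set.Ioc (0:ℝ) 1, Real.exp (t*(a*x)) * Real.exp (t*(b*y)) := by
        refine integral_congr_ae (Filter.Eventually.of_forall fun t => ?_)
        dsimp only
        rw [← Real.exp_add, ← mul_add]
    _ ≤ (∫ t in Set.Ioc (0:ℝ) 1, Real.exp (t*(a*x)) ^ (1/a)) ^ a
        * (∫ t in Set.Ioc (0:ℝ) 1, Real.exp (t*(b*y)) ^ (1/b)) ^ b := key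
    _ = (∫ t in Set.Ioc (0:ℝ) 1, Real.exp (t*x)) ^ a
        * (∫ t in Set.Ioc (0:ℝ) 1, Real.exp (t*y)) ^ b := by
        congr 1
        · congr 1
          refine integral_congr_ae (Filter.Eventually.of_forall fun t => ?_)
          dsimp only
          rw [← Real.exp_mul]
          congr 1
          field_simp
        · congr 1
          refine integral_congr_ae (Filter.Eventually.of_forall fun t => ?_)
          dsimp only
          rw [← Real.exp_mul]
          congr 1
          field_simp

lemma convexOn_log_gg : ConvexOn ℝ Set.univ (Real.log ∘ gg) := by
  refine convexOn_iff_forall_pos.mpr ⟨convex_univ, fun {x} _ {y} _ {a} {b} ha hb hab => ?_⟩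
  simp only [Function.comp_apply, smul_eq_mul]
  rw [← Real.log_rpow (gg_pos x), ← Real.log_rpow (gg_pos y),
    ← Real.log_mul (Real.rpow_pos_of_pos (gg_pos x) a).ne' (Real.rpow_pos_of_pos (gg_pos y) b).ne']
  exact Real.log_le_log (gg_pos _) (gg_log_convex_ineq ha hb hab)

lemma fA_eq (A : ℝ) (y : ℝ) : fA A y = gg (y - A) / gg y := by
  unfold fA gg
  by_cases h1 : y = 0
  · subst h1
    by_cases h2 : A = 0
    · simp [h2]
    · have h3 : (0:ℝ) - A ≠ 0 := fun h => h2 (by linarith [sub_eq_zero.mp h])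
      simp only [if_pos rfl, if_neg h2, if_neg h3, if_true, zero_sub, div_one]
      rw [Real.exp_neg, if_neg (neg_ne_zero.mpr h2),
        div_eq_div_iff h2 (neg_ne_zero.mpr h2)]
      ring
  · rw [if_neg h1]
    by_cases h2 : y = A
    · have h3 : y - A = 0 := by rw [h2, sub_self]
      rw [if_pos h2, if_pos h3, if_neg h1, h2, one_div_div]
    · have h3 : y - A ≠ 0 := sub_ne_zero.mpr h2
      rw [if_neg h2, if_neg h3, if_neg h1]
      have hy : Real.exp y - 1 ≠ 0 := by
        intro h
        exact h1 (by simpa [sub_eq_zero, Real.exp_eq_one_iff] using h)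
      field_simp

lemma fA_eq' (A : ℝ) (y : ℝ) : fA A y = gg (y - A) / gg y := fA_eq A y

theorem stmt3 (A : ℝ) (hA : 0 ≤ A) : Antitone (fA A) := by
  intro a b hab
  rw [fA_eq, fA_eq, div_le_div_iff₀ (gg_pos b) (gg_pos a)]
  rcases eq_or_lt_of_le (by linarith : (0:ℝ) ≤ A + (b - a)) with h0 | h0
  · have hba : b = a := by linarith
    rw [hba, mul_comm]
  · set l : ℝ := (b - a) / (A + (b - a)) with hl
    have hml : l * (A + (b - a)) = b - a := div_mul_cancel₀ _ h0.ne'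
    have hl0 : 0 ≤ l := div_nonneg (by linarith) h0.le
    have hl1 : 0 ≤ 1 - l := by
      have : l ≤ 1 := by rw [hl, div_le_one h0]; linarith
      linarith
    have hconv := convexOn_log_gg.2 (Set.mem_univ (a - A)) (Set.mem_univ b)
    have h1 := hconv hl1 hl0 (by ring)
    have h2 := hconv hl0 hl1 (by ring)
    have e1 : (1 - l) • (a - A) + l • b = b - A := by
      simp only [smul_eq_mul]; linear_combination hml
    have e2 : l • (a - A) + (1 - l) • b = a := by
      simp only [smul_eq_mul]; linear_combination -hml
    rw [e1] at h1
    rw [e2] at h2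
    simp only [Function.comp_apply, smul_eq_mul] at h1 h2
    have hsum : Real.log (gg (b - A)) + Real.log (gg a)
        ≤ Real.log (gg (a - A)) + Real.log (gg b) := by linarith
    rw [← Real.log_mul (gg_pos _).ne' (gg_pos _).ne',
      ← Real.log_mul (gg_pos _).ne' (gg_pos _).ne'] at hsum
    exact (Real.log_le_log_iff (mul_pos (gg_pos _) (gg_pos _))
      (mul_pos (gg_pos _) (gg_pos _))).mp hsum
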